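/- Let F be a finite extension of ℚ_p with ring of integers 𝔬 and maximal ideal 𝔭, and let F_q = 𝔬/𝔭 be the residue field. The entrywise reduction homomorphism K = GSp(4,𝔬) → GSp(4,F_q) maps the subgroup H surjectively onto the subgroup M of GSp(4,F_q), and its restriction to H has kernel K⁺ = ker(K → GSp(4,F_q)). Consequently H/K⁺ ≅ M. -/

import Mathlib

open Matrix

/-- The symplectic form `J`. -/
def Jmat (R : Type*) [CommRing R] : Matrix (Fin 4) (Fin 4) R :=
  !![0, 0, 0, 1; 0, 0, 1, 0; 0, -1, 0, 0; -1, 0, 0, 0]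

/-- `GSp(4,R)`: invertible matrices `g` with `gᵀ J g = μ(g) J` for some unit `μ(g)`. -/
def GSp4 (R : Type*) [CommRing R] : Set (Matrix (Fin 4) (Fin 4) R) :=
  {g | IsUnit g ∧ ∃ μ : Rˣ, gᵀ * Jmat R * g = (μ : R) • Jmat R}

/-- The ring of integers `𝔬 = {x : ‖x‖ ≤ 1}` of a nonarchimedean field, as a subring. -/
def intSubring (F : Type*) [NormedField F]
    (hna : IsNonarchimedean (fun x : F => ‖x‖)) : Subring F where
  carrier := {x | ‖x‖ ≤ 1}
  one_mem' := by simp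
  zero_mem' := by simp
  mul_mem' := by
    intro a b ha hb
    calc ‖a * b‖ = ‖a‖ * ‖b‖ := norm_mul a b
      _ ≤ 1 := mul_le_one₀ ha (norm_nonneg b) hb
  add_mem' := by
    intro a b ha hb
    exact le_trans (hna a b) (max_le ha hb)
  neg_mem' := by
    intro a ha
    simpa using ha

/-- The maximal ideal `𝔭 = {x : ‖x‖ < 1}` of the ring of integers. -/
def maxIdeal (F : Type*) [NormedField F] (hna : IsNonarchimedean (fun x : F => ‖x‖)) :
    Ideal (intSubring F hna) where
  carrier := {x | ‖(x : F)‖ < 1}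
  zero_mem' := by simp
  add_mem' := by
    intro a b ha hb
    exact lt_of_le_of_lt (hna (a : F) (b : F)) (max_lt ha hb)
  smul_mem' := by
    intro c x hx
    have hc : ‖(c : F)‖ ≤ 1 := c.2
    calc ‖((c * x : intSubring F hna) : F)‖ = ‖(c : F)‖ * ‖(x : F)‖ := norm_mul _ _
      _ ≤ 1 * ‖(x : F)‖ := by
          exact mul_le_mul_of_nonneg_right hc (norm_nonneg _)
      _ = ‖(x : F)‖ := one_mul _
      _ < 1 := hx

/-- The subgroup `H ⊆ K = GSp(4,𝔬)`: matrices whose `(1,3), (1,4), (2,3), (2,4), (3,1),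
(3,2), (4,1), (4,2)` entries lie in `𝔭`, as a set of matrices over `𝔬`. -/
def Hgp (F : Type*) [NormedField F] (hna : IsNonarchimedean (fun x : F => ‖x‖)) :
    Set (Matrix (Fin 4) (Fin 4) (intSubring F hna)) :=
  {g | g ∈ GSp4 (intSubring F hna) ∧
    g 0 2 ∈ maxIdeal F hna ∧ g 0 3 ∈ maxIdeal F hna ∧
    g 1 2 ∈ maxIdeal F hna ∧ g 1 3 ∈ maxIdeal F hna ∧
    g 2 0 ∈ maxIdeal F hna ∧ g 2 1 ∈ maxIdeal F hna ∧
    g 3 0 ∈ maxIdeal F hna ∧ g 3 1 ∈ maxIdeal F hna}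

/-- The subgroup `M` of `GSp(4, F_q)`: block matrices with rows `(a,b,0,0)`, `(c,d,0,0)`,
`(0,0,λa,−λb)`, `(0,0,−λc,λd)` with `λ` a unit and `ad − bc` a unit. -/
def Mset (R : Type*) [CommRing R] : Set (Matrix (Fin 4) (Fin 4) R) :=
  {g | ∃ a b c d lam : R, IsUnit lam ∧ IsUnit (a * d - b * c) ∧
    g = !![a, b, 0, 0; c, d, 0, 0; 0, 0, lam * a, -(lam * b); 0, 0, -(lam * c), lam * d]}

section AuxLemmas

lemma Jmat_map {R S : Type*} [CommRing R] [CommRing S] (f : R →+* S) :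
    (Jmat R).map f = Jmat S := by
  ext i j; fin_cases i <;> fin_cases j <;>
    simp [Jmat, Matrix.map_apply, Matrix.vecHead, Matrix.vecTail]

lemma map_smul4 {R S : Type*} [CommRing R] [CommRing S] (f : R →+* S) (c : R)
    (M : Matrix (Fin 4) (Fin 4) R) : (c • M).map f = f c • M.map f := by
  ext i j; simp [Matrix.map_apply, smul_eq_mul]

variable {F : Type*} [NormedField F] (hna : IsNonarchimedean (fun x : F => ‖x‖))

lemma mem_maxIdeal {x : intSubring F hna} : x ∈ maxIdeal F hna ↔ ‖(x : F)‖ < 1 := Iff.rfl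

lemma aux_isUnit_of_not_mem {x : intSubring F hna} (h : x ∉ maxIdeal F hna) : IsUnit x := by
  have hle : ‖(x : F)‖ ≤ 1 := x.2
  have h1 : ‖(x : F)‖ = 1 := le_antisymm hle (not_lt.mp (by simpa [mem_maxIdeal] using h))
  have hx0 : (x : F) ≠ 0 := fun h0 => by simp [h0] at h1
  set y : intSubring F hna := ⟨(x : F)⁻¹, by
    show ‖(x : F)⁻¹‖ ≤ 1
    rw [norm_inv, h1]; norm_num⟩ with hy
  refine IsUnit.of_mul_eq_one (a := x) y ?_
  ext
  push_cast [hy]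
  exact mul_inv_cancel₀ hx0

lemma aux_maxIdeal_isMaximal : (maxIdeal F hna).IsMaximal := by
  rw [Ideal.isMaximal_iff]
  constructor
  · intro h
    have : ‖((1 : intSubring F hna) : F)‖ < 1 := mem_maxIdeal hna |>.mp h
    simp at this
  · intro J x _ hxI hxJ
    obtain ⟨u, hu⟩ := aux_isUnit_of_not_mem hna hxI
    have h1 : (1 : intSubring F hna) = ↑u⁻¹ * x := by rw [← hu, Units.inv_mul]
    rw [h1]
    exact J.mul_mem_left _ hxJ

lemma aux_isUnit_of_mk {x : intSubring F hna}
    (h : IsUnit (Ideal.Quotient.mk (maxIdeal F hna) x)) : IsUnit x := by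
  refine aux_isUnit_of_not_mem hna fun hx => ?_
  rw [Ideal.Quotient.eq_zero_iff_mem.mpr hx] at h
  haveI := Ideal.Quotient.nontrivial_iff.mpr (aux_maxIdeal_isMaximal hna).ne_top
  exact not_isUnit_zero h

lemma aux_isUnit_mk_of_ne_zero {x : (intSubring F hna) ⧸ maxIdeal F hna}
    (h : x ≠ 0) : IsUnit x := by
  obtain ⟨y, rfl⟩ := Ideal.Quotient.mk_surjective x
  have hy : y ∉ maxIdeal F hna := fun hy => h (Ideal.Quotient.eq_zero_iff_mem.mpr hy)
  exact (aux_isUnit_of_not_mem hna hy).map (Ideal.Quotient.mk (maxIdeal F hna))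

end AuxLemmas
set_option maxHeartbeats 1600000 in
set_option synthInstance.maxHeartbeats 400000 in
lemma part_one {F : Type*} [NormedField F] (hna : IsNonarchimedean (fun x : F => ‖x‖))
    (hmax : (maxIdeal F hna).IsMaximal) :
    ∀ g ∈ Hgp F hna,
      g.map (Ideal.Quotient.mk (maxIdeal F hna)) ∈
        Mset ((intSubring F hna) ⧸ maxIdeal F hna) ∧
      g.map (Ideal.Quotient.mk (maxIdeal F hna)) ∈
        GSp4 ((intSubring F hna) ⧸ maxIdeal F hna) := by
  rintro g ⟨⟨hgU, μ, hμ⟩, z02, z03, z12, z13, z20, z21, z30, z31⟩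
  haveI := Ideal.Quotient.nontrivial_iff.mpr hmax.ne_top
  set mk := Ideal.Quotient.mk (maxIdeal F hna) with hmk
  set A := g.map mk with hA
  have hz02 : A 0 2 = 0 := Ideal.Quotient.eq_zero_iff_mem.mpr z02
  have hz03 : A 0 3 = 0 := Ideal.Quotient.eq_zero_iff_mem.mpr z03
  have hz12 : A 1 2 = 0 := Ideal.Quotient.eq_zero_iff_mem.mpr z12
  have hz13 : A 1 3 = 0 := Ideal.Quotient.eq_zero_iff_mem.mpr z13
  have hz20 : A 2 0 = 0 := Ideal.Quotient.eq_zero_iff_mem.mpr z20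
  have hz21 : A 2 1 = 0 := Ideal.Quotient.eq_zero_iff_mem.mpr z21
  have hz30 : A 3 0 = 0 := Ideal.Quotient.eq_zero_iff_mem.mpr z30
  have hz31 : A 3 1 = 0 := Ideal.Quotient.eq_zero_iff_mem.mpr z31
  have hAU : IsUnit A := by
    have := hgU.map (RingHom.mapMatrix (m := Fin 4) mk)
    simpa [RingHom.mapMatrix_apply, ← hA] using this
  have hμu : IsUnit (mk ↑μ) := (μ.isUnit).map mk
  have hE : Aᵀ * Jmat ((intSubring F hna) ⧸ maxIdeal F hna) * A =
      (mk ↑μ) • Jmat ((intSubring F hna) ⧸ maxIdeal F hna) := by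
    have h0 := congrArg (fun M => M.map mk) hμ
    simpa only [Matrix.map_mul, Matrix.transpose_map, Jmat_map, map_smul4] using h0
  have e02 := Matrix.ext_iff.mpr hE 0 2
  have e03 := Matrix.ext_iff.mpr hE 0 3
  have e12 := Matrix.ext_iff.mpr hE 1 2
  have e13 := Matrix.ext_iff.mpr hE 1 3
  simp [Jmat, Matrix.mul_apply, Fin.sum_univ_four, Matrix.vecHead, Matrix.vecTail,
    smul_eq_mul, hz02, hz03, hz12, hz13, hz20, hz21, hz30, hz31] at e02 e03 e12 e13
  -- μ̄ is a unit, with explicit inverse relation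
  have hμinv : mk ↑μ * ↑hμu.unit⁻¹ = 1 := by
    simpa only [hμu.unit_spec] using Units.mul_inv hμu.unit
  -- the determinant of the upper-left block is a unit
  have hδu : IsUnit (A 0 0 * A 1 1 - A 0 1 * A 1 0) := by
    apply aux_isUnit_mk_of_ne_zero hna
    intro h0
    have ha : A 0 0 * mk ↑μ = 0 := by
      linear_combination A 2 2 * h0 - A 0 0 * e12 + A 0 1 * e02
    have hc : A 1 0 * mk ↑μ = 0 := by
      linear_combination A 1 1 * e02 - A 1 0 * e12 - A 3 2 * h0
    have ha0 : A 0 0 = 0 := by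
      linear_combination ↑hμu.unit⁻¹ * ha - A 0 0 * hμinv
    have hc0 : A 1 0 = 0 := by
      linear_combination ↑hμu.unit⁻¹ * hc - A 1 0 * hμinv
    have hμ0 : mk ↑μ = 0 := by linear_combination -e03 + A 2 3 * hc0 + A 3 3 * ha0
    exact one_ne_zero
      (by linear_combination (↑hμu.unit⁻¹ : (intSubring F hna) ⧸ maxIdeal F hna) * hμ0 - hμinv)
  have hδinv : ↑hδu.unit⁻¹ * (A 0 0 * A 1 1 - A 0 1 * A 1 0) = 1 := by
    simpa only [hδu.unit_spec] using Units.inv_mul hδu.unit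
  set lam := mk ↑μ * ↑hδu.unit⁻¹ with hlam
  have k22 : (A 0 0 * A 1 1 - A 0 1 * A 1 0) * A 2 2 = A 0 0 * mk ↑μ := by
    linear_combination A 0 0 * e12 - A 0 1 * e02
  have k32 : (A 0 0 * A 1 1 - A 0 1 * A 1 0) * A 3 2 = -(A 1 0 * mk ↑μ) := by
    linear_combination A 1 1 * e02 - A 1 0 * e12
  have k23 : (A 0 0 * A 1 1 - A 0 1 * A 1 0) * A 2 3 = -(A 0 1 * mk ↑μ) := by
    linear_combination A 0 0 * e13 - A 0 1 * e03
  have k33 : (A 0 0 * A 1 1 - A 0 1 * A 1 0) * A 3 3 = A 1 1 * mk ↑μ := by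
    linear_combination A 1 1 * e03 - A 1 0 * e13
  have h22 : A 2 2 = lam * A 0 0 := by
    linear_combination (↑hδu.unit⁻¹ : (intSubring F hna) ⧸ maxIdeal F hna) * k22 -
      A 2 2 * hδinv
  have h32 : A 3 2 = -(lam * A 1 0) := by
    linear_combination (↑hδu.unit⁻¹ : (intSubring F hna) ⧸ maxIdeal F hna) * k32 -
      A 3 2 * hδinv
  have h23 : A 2 3 = -(lam * A 0 1) := by
    linear_combination (↑hδu.unit⁻¹ : (intSubring F hna) ⧸ maxIdeal F hna) * k23 -
      A 2 3 * hδinv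
  have h33 : A 3 3 = lam * A 1 1 := by
    linear_combination (↑hδu.unit⁻¹ : (intSubring F hna) ⧸ maxIdeal F hna) * k33 -
      A 3 3 * hδinv
  have hlamu : IsUnit lam := hμu.mul (hδu.unit⁻¹).isUnit
  refine ⟨⟨A 0 0, A 0 1, A 1 0, A 1 1, lam, hlamu, hδu, ?_⟩,
    hAU, ⟨hμu.unit, by rw [IsUnit.unit_spec]; exact hE⟩⟩
  ext i j
  fin_cases i <;> fin_cases j <;>
    simp [hz02, hz03, hz12, hz13, hz20, hz21, hz30, hz31, h22, h23, h32, h33,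
      Matrix.vecHead, Matrix.vecTail]

set_option maxHeartbeats 1600000 in
set_option synthInstance.maxHeartbeats 400000 in
lemma part_two {F : Type*} [NormedField F] (hna : IsNonarchimedean (fun x : F => ‖x‖))
    (hmax : (maxIdeal F hna).IsMaximal) :
    ∀ m ∈ Mset ((intSubring F hna) ⧸ maxIdeal F hna),
      ∃ g ∈ Hgp F hna, g.map (Ideal.Quotient.mk (maxIdeal F hna)) = m := by
  rintro m ⟨a, b, c, d, lam, hlamU, hdU, rfl⟩
  obtain ⟨a0, rfl⟩ := Ideal.Quotient.mk_surjective a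
  obtain ⟨b0, rfl⟩ := Ideal.Quotient.mk_surjective b
  obtain ⟨c0, rfl⟩ := Ideal.Quotient.mk_surjective c
  obtain ⟨d0, rfl⟩ := Ideal.Quotient.mk_surjective d
  obtain ⟨l0, rfl⟩ := Ideal.Quotient.mk_surjective lam
  have hl : IsUnit l0 := aux_isUnit_of_mk hna hlamU
  have hd : IsUnit (a0 * d0 - b0 * c0) := by
    apply aux_isUnit_of_mk hna
    rw [RingHom.map_sub, RingHom.map_mul, RingHom.map_mul]
    exact hdU
  have hu : (↑hd.unit : intSubring F hna) = a0 * d0 - b0 * c0 := hd.unit_spec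
  have hv : (↑hl.unit : intSubring F hna) = l0 := hl.unit_spec
  have hinv1 : (↑hd.unit⁻¹ : intSubring F hna) * (a0 * d0 - b0 * c0) = 1 := by
    simpa only [hu] using Units.inv_mul hd.unit
  have hinv2 : (↑(hl.unit * hd.unit)⁻¹ : intSubring F hna) *
      (l0 * (a0 * d0 - b0 * c0)) = 1 := by
    simpa only [Units.val_mul, hu, hv, mul_assoc] using Units.inv_mul (hl.unit * hd.unit)
  have hinvv : (↑hl.unit⁻¹ : intSubring F hna) * l0 = 1 := by
    simpa only [hv] using Units.inv_mul hl.unit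
  have hinv1F := congrArg (Subtype.val) hinv1
  have hinv2F := congrArg (Subtype.val) hinv2
  have hinvvF := congrArg (Subtype.val) hinvv
  push_cast at hinv1F hinv2F hinvvF
  refine ⟨!![a0, b0, 0, 0; c0, d0, 0, 0; 0, 0, l0 * a0, -(l0 * b0);
      0, 0, -(l0 * c0), l0 * d0], ⟨⟨?_, ⟨hl.unit * hd.unit, ?_⟩⟩,
      ?_, ?_, ?_, ?_, ?_, ?_, ?_, ?_⟩, ?_⟩
  · refine ⟨⟨_, !![↑hd.unit⁻¹ * d0, -(↑hd.unit⁻¹ * b0), 0, 0;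
         -(↑hd.unit⁻¹ * c0), ↑hd.unit⁻¹ * a0, 0, 0;
         0, 0, ↑(hl.unit * hd.unit)⁻¹ * d0, ↑(hl.unit * hd.unit)⁻¹ * b0;
         0, 0, ↑(hl.unit * hd.unit)⁻¹ * c0, ↑(hl.unit * hd.unit)⁻¹ * a0], ?_, ?_⟩, rfl⟩ <;>
      · ext i j
        fin_cases i <;> fin_cases j <;>
          simp [Matrix.mul_apply, Fin.sum_univ_four, Matrix.vecHead, Matrix.vecTail,
            Matrix.one_apply] <;>
          first
            | linear_combination hinv1F
            | linear_combination hinv2F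
            | linear_combination hinvvF
            | linear_combination (((↑hl.unit⁻¹ : intSubring F hna) : F) * (↑l0 : F)) * hinv1F + hinvvF
            | ring1
  · ext i j
    fin_cases i <;> fin_cases j <;>
      simp [Jmat, Matrix.mul_apply, Fin.sum_univ_four, Matrix.vecHead,
        Matrix.vecTail, smul_eq_mul, Units.val_mul, hu, hv] <;> ring1
  · simpa [Matrix.vecHead, Matrix.vecTail] using (maxIdeal F hna).zero_mem
  · simpa [Matrix.vecHead, Matrix.vecTail] using (maxIdeal F hna).zero_mem
  · simpa [Matrix.vecHead, Matrix.vecTail] using (maxIdeal F hna).zero_mem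
  · simpa [Matrix.vecHead, Matrix.vecTail] using (maxIdeal F hna).zero_mem
  · simpa [Matrix.vecHead, Matrix.vecTail] using (maxIdeal F hna).zero_mem
  · simpa [Matrix.vecHead, Matrix.vecTail] using (maxIdeal F hna).zero_mem
  · simpa [Matrix.vecHead, Matrix.vecTail] using (maxIdeal F hna).zero_mem
  · simpa [Matrix.vecHead, Matrix.vecTail] using (maxIdeal F hna).zero_mem
  · ext i j
    fin_cases i <;> fin_cases j <;>
      simp [Matrix.map_apply, Matrix.vecHead, Matrix.vecTail, RingHom.map_mul, RingHom.map_neg]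

set_option maxHeartbeats 1600000 in
set_option synthInstance.maxHeartbeats 400000 in
/-- The entrywise reduction `K = GSp(4,𝔬) → GSp(4,F_q)`, `F_q = 𝔬/𝔭`,
maps `H` surjectively onto `M ⊆ GSp(4,F_q)`, and its restriction to `H` has kernel
`K⁺ = ker(K → GSp(4,F_q))`. -/
theorem reduction_H_onto_M_kernel_Kplus
    (p : ℕ) [Fact p.Prime] (F : Type*) [NontriviallyNormedField F]
    [NormedAlgebra ℚ_[p] F] [FiniteDimensional ℚ_[p] F]
    (hna : IsNonarchimedean (fun x : F => ‖x‖)) :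
    (∀ g ∈ Hgp F hna,
      g.map (Ideal.Quotient.mk (maxIdeal F hna)) ∈
        Mset ((intSubring F hna) ⧸ maxIdeal F hna) ∧
      g.map (Ideal.Quotient.mk (maxIdeal F hna)) ∈
        GSp4 ((intSubring F hna) ⧸ maxIdeal F hna)) ∧
    (∀ m ∈ Mset ((intSubring F hna) ⧸ maxIdeal F hna),
      ∃ g ∈ Hgp F hna, g.map (Ideal.Quotient.mk (maxIdeal F hna)) = m) ∧
    {g | g ∈ Hgp F hna ∧ g.map (Ideal.Quotient.mk (maxIdeal F hna)) = 1} =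
      {g | g ∈ GSp4 (intSubring F hna) ∧
        g.map (Ideal.Quotient.mk (maxIdeal F hna)) = 1} := by
  classical
  haveI hmax := aux_maxIdeal_isMaximal hna
  refine ⟨part_one hna hmax, part_two hna hmax, ?_⟩
  · -- Part 3: kernel
    ext g
    simp only [Set.mem_setOf_eq]
    constructor
    · rintro ⟨hH, h1⟩
      exact ⟨hH.1, h1⟩
    · rintro ⟨hG, h1⟩
      have key : ∀ i j : Fin 4, i ≠ j →
          g i j ∈ maxIdeal F hna := by
        intro i j hij
        have := Matrix.ext_iff.mpr h1 i j
        rw [Matrix.map_apply, Matrix.one_apply_ne hij] at this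
        exact Ideal.Quotient.eq_zero_iff_mem.mp this
      exact ⟨⟨hG, key 0 2 (by decide), key 0 3 (by decide), key 1 2 (by decide),
        key 1 3 (by decide), key 2 0 (by decide), key 2 1 (by decide),
        key 3 0 (by decide), key 3 1 (by decide)⟩, h1⟩
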